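/- Let J be an ideal of S = K[x_1,...,x_n] with a fixed monomial order, G_J a Gröbner basis of J, and E an ideal such that for all f ∈ G_J and g ∈ E the S-polynomial S(f,g) lies in E (E is S-nice with respect to G_J). Then (J,E) is a Gröbner-nice pair, i.e., in(J+E) = in(J) + in(E). -/

import Mathlib

open MvPolynomial

variable {K : Type*} [Field K] {n : ℕ}

/-- The leading monomial (exponent vector) of a polynomial with respect to a monomial
order `m`: the maximum of the support; by convention `lm m 0 = 0`. -/
noncomputable def lm (m : MonomialOrder (Fin n)) (f : MvPolynomial (Fin n) K) :
    Fin n →₀ ℕ :=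
  m.toSyn.symm (f.support.sup fun d => m.toSyn d)

/-- The initial ideal of `I`: the ideal generated by the leading monomials of the
nonzero elements of `I`. -/
noncomputable def initialIdeal (m : MonomialOrder (Fin n))
    (I : Ideal (MvPolynomial (Fin n) K)) : Ideal (MvPolynomial (Fin n) K) :=
  Ideal.span {p | ∃ f ∈ I, f ≠ 0 ∧ p = monomial (lm m f) (1 : K)}

/-- `G` is a Gröbner basis of `I`: a finite set of nonzero polynomials generating `I`
whose leading monomials generate the initial ideal of `I`. -/
def IsGroebnerBasis (m : MonomialOrder (Fin n)) (I : Ideal (MvPolynomial (Fin n) K))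
    (G : Set (MvPolynomial (Fin n) K)) : Prop :=
  G.Finite ∧ (0 : MvPolynomial (Fin n) K) ∉ G ∧ Ideal.span G = I ∧
    Ideal.span ((fun g => monomial (lm m g) (1 : K)) '' G) = initialIdeal m I

/-- The S-polynomial `S(f,g)` with respect to the monomial order `m`. -/
noncomputable def sPoly (m : MonomialOrder (Fin n)) (f g : MvPolynomial (Fin n) K) :
    MvPolynomial (Fin n) K :=
  monomial (lm m f ⊔ lm m g - lm m f) (f.coeff (lm m f))⁻¹ * f -
    monomial (lm m f ⊔ lm m g - lm m g) (g.coeff (lm m g))⁻¹ * g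

/-- An ideal is a monomial ideal if it is generated by monomials. -/
def IsMonomialIdeal (I : Ideal (MvPolynomial (Fin n) K)) : Prop :=
  ∃ M : Set (Fin n →₀ ℕ), I = Ideal.span ((fun μ => (monomial μ (1 : K))) '' M)

section Aux

variable (m : MonomialOrder (Fin n)) {f p e : MvPolynomial (Fin n) K}

lemma toSyn_lm (f : MvPolynomial (Fin n) K) :
    m.toSyn (lm m f) = f.support.sup fun d => m.toSyn d := by
  simp [lm]

lemma lm_mem_support (hf : f ≠ 0) : lm m f ∈ f.support := by
  obtain ⟨b, hb, he⟩ := Finset.exists_mem_eq_sup f.support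
    (Finset.nonempty_iff_ne_empty.mpr (mt MvPolynomial.support_eq_empty.mp hf)) fun d => m.toSyn d
  have : lm m f = b := by simp [lm, he]
  rwa [this]

lemma coeff_lm_ne_zero (hf : f ≠ 0) : f.coeff (lm m f) ≠ 0 :=
  mem_support_iff.mp (lm_mem_support m hf)

lemma le_toSyn_lm {d : Fin n →₀ ℕ} (hd : d ∈ f.support) :
    m.toSyn d ≤ m.toSyn (lm m f) := by
  rw [toSyn_lm]; exact Finset.le_sup hd

lemma coeff_eq_zero_of_lm_lt {d : Fin n →₀ ℕ} (h : m.toSyn (lm m f) < m.toSyn d) :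
    f.coeff d = 0 := by
  by_contra hc
  exact absurd (le_toSyn_lm m (mem_support_iff.mpr hc)) (not_le.mpr h)

lemma lm_eq_of {μ : Fin n →₀ ℕ} (h1 : f.coeff μ ≠ 0)
    (h2 : ∀ d ∈ f.support, m.toSyn d ≤ m.toSyn μ) : lm m f = μ := by
  apply m.toSyn.injective
  apply le_antisymm
  · rw [toSyn_lm]; exact Finset.sup_le h2
  · exact le_toSyn_lm m (mem_support_iff.mpr h1)

lemma lm_monomial_mul {δ : Fin n →₀ ℕ} {c : K} (hc : c ≠ 0) (hf : f ≠ 0) :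
    lm m (monomial δ c * f) = δ + lm m f := by
  apply lm_eq_of
  · rw [coeff_monomial_mul]
    exact mul_ne_zero hc (coeff_lm_ne_zero m hf)
  · intro d hd
    rw [mem_support_iff, coeff_monomial_mul'] at hd
    split_ifs at hd with h
    · have hd' : f.coeff (d - δ) ≠ 0 := by
        intro h0; rw [h0, mul_zero] at hd; exact hd rfl
      have := le_toSyn_lm m (f := f) (mem_support_iff.mpr hd')
      calc m.toSyn d = m.toSyn (δ + (d - δ)) := by rw [add_tsub_cancel_of_le h]
        _ = m.toSyn δ + m.toSyn (d - δ) := by rw [map_add]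
        _ ≤ m.toSyn δ + m.toSyn (lm m f) := by exact add_le_add_right this _
        _ = m.toSyn (δ + lm m f) := by rw [map_add]
    · exact absurd rfl hd

lemma key (J E : Ideal (MvPolynomial (Fin n) K))
    (GJ : Set (MvPolynomial (Fin n) K)) (hGJ : IsGroebnerBasis m J GJ)
    (hT : ∀ f ∈ GJ, ∀ e ∈ E, e ≠ 0 →
      monomial (lm m f ⊔ lm m e - lm m f) ((f.coeff (lm m f))⁻¹) * f ∈ E)
    (ν : m.syn) :
    ∀ p e : MvPolynomial (Fin n) K, p ∈ J → e ∈ E → p + e ≠ 0 →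
      m.toSyn (lm m p) ≤ ν → m.toSyn (lm m e) ≤ ν →
      monomial (lm m (p + e)) (1 : K) ∈ initialIdeal m J + initialIdeal m E := by
  induction ν using WellFoundedLT.induction with
  | _ ν ih =>
  intro p e hp he hne hνp hνe
  rw [Ideal.add_eq_sup]
  by_cases hp0 : p = 0
  · subst hp0
    rw [zero_add] at hne ⊢
    exact Submodule.mem_sup_right (Ideal.subset_span ⟨e, he, hne, rfl⟩)
  by_cases he0 : e = 0
  · subst he0
    rw [add_zero] at hne ⊢
    exact Submodule.mem_sup_left (Ideal.subset_span ⟨p, hp, hne, rfl⟩)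
  have hsupp : ∀ d ∈ (p + e).support,
      m.toSyn d ≤ max (m.toSyn (lm m p)) (m.toSyn (lm m e)) := by
    intro d hd
    have := MvPolynomial.support_add (p := p) (q := e) hd
    rcases Finset.mem_union.mp this with h | h
    · exact le_max_of_le_left (le_toSyn_lm m h)
    · exact le_max_of_le_right (le_toSyn_lm m h)
  rcases lt_trichotomy (m.toSyn (lm m p)) (m.toSyn (lm m e)) with hlt | heq | hgt
  · have hco : (p + e).coeff (lm m e) ≠ 0 := by
      rw [coeff_add, coeff_eq_zero_of_lm_lt m hlt, zero_add]
      exact coeff_lm_ne_zero m he0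
    have hlm : lm m (p + e) = lm m e :=
      lm_eq_of m hco (fun d hd => le_of_le_of_eq (hsupp d hd) (max_eq_right hlt.le))
    rw [hlm]
    exact Submodule.mem_sup_right (Ideal.subset_span ⟨e, he, he0, rfl⟩)
  · -- equal leading monomials
    have hμ : lm m e = lm m p := m.toSyn.injective heq.symm
    by_cases hc : (p + e).coeff (lm m p) ≠ 0
    · have hlm : lm m (p + e) = lm m p :=
        lm_eq_of m hc (fun d hd => le_of_le_of_eq (hsupp d hd)
          (by rw [heq, max_self]))
      rw [hlm]
      exact Submodule.mem_sup_left (Ideal.subset_span ⟨p, hp, hp0, rfl⟩)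
    · push_neg at hc
      set μ := lm m p with hμdef
      -- find f ∈ GJ with lm f ≤ μ
      have hμJ : monomial μ (1 : K) ∈ initialIdeal m J :=
        Ideal.subset_span ⟨p, hp, hp0, rfl⟩
      rw [← hGJ.2.2.2, ← Set.image_image (fun s => monomial s (1 : K)) (lm m)] at hμJ
      have := mem_ideal_span_monomial_image.mp hμJ μ
        (by rw [mem_support_iff, coeff_monomial]; simp)
      obtain ⟨si, ⟨f, hfGJ, rfl⟩, hle⟩ := this
      have hf0 : f ≠ 0 := fun h => hGJ.2.1 (h ▸ hfGJ)
      have hcf : f.coeff (lm m f) ≠ 0 := coeff_lm_ne_zero m hf0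
      set t : MvPolynomial (Fin n) K :=
        monomial (μ - lm m f) ((f.coeff (lm m f))⁻¹) * f with htdef
      have htE : t ∈ E := by
        have := hT f hfGJ e he he0
        rwa [hμ, sup_eq_right.mpr hle] at this
      have htJ : t ∈ J := Ideal.mul_mem_left _ _
        (hGJ.2.2.1 ▸ Ideal.subset_span hfGJ)
      have hlmt : lm m t = μ := by
        rw [htdef, lm_monomial_mul m (inv_ne_zero hcf) hf0, tsub_add_cancel_of_le hle]
      have hcoefft : t.coeff μ = 1 := by
        rw [htdef, coeff_monomial_mul', if_pos tsub_le_self,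
          tsub_tsub_cancel_of_le hle, inv_mul_cancel₀ hcf]
      set c := e.coeff μ with hcdef
      set p' := p + C c * t with hp'def
      set e' := e - C c * t with he'def
      have hsum : p' + e' = p + e := by rw [hp'def, he'def]; ring
      have hp'mem : p' ∈ J := J.add_mem hp (Ideal.mul_mem_left _ _ htJ)
      have he'mem : e' ∈ E := E.sub_mem he (Ideal.mul_mem_left _ _ htE)
      have hcoep' : p'.coeff μ = 0 := by
        rw [hp'def, coeff_add, coeff_C_mul, hcoefft, mul_one]
        show coeff μ p + coeff μ e = 0
        rw [← coeff_add]; exact hc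
      have hcoee' : e'.coeff μ = 0 := by
        rw [he'def, coeff_sub, coeff_C_mul, hcoefft, mul_one]
        show coeff μ e - coeff μ e = 0
        rw [sub_self]
      have hboundt : ∀ d ∈ t.support, m.toSyn d ≤ m.toSyn μ := by
        intro d hd; have := le_toSyn_lm m hd; rwa [hlmt] at this
      have hboundp' : ∀ d ∈ p'.support, m.toSyn d ≤ m.toSyn μ := by
        intro d hd
        rw [mem_support_iff, hp'def, coeff_add, coeff_C_mul] at hd
        by_cases h1 : p.coeff d ≠ 0
        · exact le_toSyn_lm m (mem_support_iff.mpr h1)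
        · push_neg at h1
          rw [h1, zero_add] at hd
          have h2 : t.coeff d ≠ 0 := by
            intro h0; rw [h0, mul_zero] at hd; exact hd rfl
          exact hboundt d (mem_support_iff.mpr h2)
      have hbounde' : ∀ d ∈ e'.support, m.toSyn d ≤ m.toSyn μ := by
        intro d hd
        rw [mem_support_iff, he'def, coeff_sub, coeff_C_mul] at hd
        by_cases h1 : e.coeff d ≠ 0
        · have := le_toSyn_lm m (mem_support_iff.mpr h1)
          rwa [hμ] at this
        · push_neg at h1
          rw [h1, zero_sub, neg_ne_zero] at hd
          have h2 : t.coeff d ≠ 0 := by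
            intro h0; rw [h0, mul_zero] at hd; exact hd rfl
          exact hboundt d (mem_support_iff.mpr h2)
      by_cases hp'0 : p' = 0
      · have hee : p + e = e' := by rw [← hsum, hp'0, zero_add]
        rw [hee]
        have he'0 : e' ≠ 0 := by rw [← hee]; exact hne
        exact Submodule.mem_sup_right (Ideal.subset_span ⟨e', he'mem, he'0, rfl⟩)
      by_cases he'0 : e' = 0
      · have hpp : p + e = p' := by rw [← hsum, he'0, add_zero]
        rw [hpp]
        have hp'ne : p' ≠ 0 := by rw [← hpp]; exact hne
        exact Submodule.mem_sup_left (Ideal.subset_span ⟨p', hp'mem, hp'ne, rfl⟩)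
      have hltp' : m.toSyn (lm m p') < m.toSyn μ := by
        refine lt_of_le_of_ne (hboundp' _ (lm_mem_support m hp'0)) (fun habs => ?_)
        have : lm m p' = μ := m.toSyn.injective habs
        exact coeff_lm_ne_zero m hp'0 (this ▸ hcoep')
      have hlte' : m.toSyn (lm m e') < m.toSyn μ := by
        refine lt_of_le_of_ne (hbounde' _ (lm_mem_support m he'0)) (fun habs => ?_)
        have : lm m e' = μ := m.toSyn.injective habs
        exact coeff_lm_ne_zero m he'0 (this ▸ hcoee')
      have hνlt : max (m.toSyn (lm m p')) (m.toSyn (lm m e')) < ν :=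
        lt_of_lt_of_le (max_lt hltp' hlte') hνp
      have := ih _ hνlt p' e' hp'mem he'mem (by rw [hsum]; exact hne)
        (le_max_left _ _) (le_max_right _ _)
      rwa [hsum, Ideal.add_eq_sup] at this
  · have hco : (p + e).coeff (lm m p) ≠ 0 := by
      rw [coeff_add, coeff_eq_zero_of_lm_lt m hgt, add_zero]
      exact coeff_lm_ne_zero m hp0
    have hlm : lm m (p + e) = lm m p :=
      lm_eq_of m hco (fun d hd => le_of_le_of_eq (hsupp d hd) (max_eq_left hgt.le))
    rw [hlm]
    exact Submodule.mem_sup_left (Ideal.subset_span ⟨p, hp, hp0, rfl⟩)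

end Aux

/-- If `E` is S-nice with respect to a Gröbner basis `G_J` of `J` (all S-polynomials
`S(f,g)` with `f ∈ G_J`, `g ∈ E` lie in `E`), then `(J,E)` is a Gröbner-nice pair. -/
theorem stmt15 (m : MonomialOrder (Fin n)) (J E : Ideal (MvPolynomial (Fin n) K))
    (GJ : Set (MvPolynomial (Fin n) K)) (hGJ : IsGroebnerBasis m J GJ)
    (hS : ∀ f ∈ GJ, ∀ g ∈ E, g ≠ 0 → sPoly m f g ∈ E) :
    initialIdeal m (J + E) = initialIdeal m J + initialIdeal m E := by
  have hT : ∀ f ∈ GJ, ∀ e ∈ E, e ≠ 0 →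
      monomial (lm m f ⊔ lm m e - lm m f) ((f.coeff (lm m f))⁻¹) * f ∈ E := by
    intro f hf e he he0
    have h1 := hS f hf e he he0
    have h2 : monomial (lm m f ⊔ lm m e - lm m e) ((e.coeff (lm m e))⁻¹) * e ∈ E :=
      Ideal.mul_mem_left _ _ he
    have := E.add_mem h1 h2
    rwa [sPoly, sub_add_cancel] at this
  apply le_antisymm
  · rw [initialIdeal, Ideal.span_le]
    rintro x ⟨h, hmem, hne, rfl⟩
    rw [Ideal.add_eq_sup, Submodule.mem_sup] at hmem
    obtain ⟨p, hp, e, he, rfl⟩ := hmem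
    exact key m J E GJ hGJ hT (max (m.toSyn (lm m p)) (m.toSyn (lm m e))) p e hp he hne
      (le_max_left _ _) (le_max_right _ _)
  · rw [Ideal.add_eq_sup]
    apply sup_le
    · apply Ideal.span_mono
      rintro x ⟨f, hf, hne, rfl⟩
      exact ⟨f, Submodule.mem_sup_left hf, hne, rfl⟩
    · apply Ideal.span_mono
      rintro x ⟨f, hf, hne, rfl⟩
      exact ⟨f, Submodule.mem_sup_right hf, hne, rfl⟩
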